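/- Let $g$ be a continuous solution on $[0,\tilde T]$ of the integral equation $g(t)=c_0+\int_0^t h(s)\,ds+c_1\int_0^t g(s)^p\,ds$, where $c_0,c_1\ge 0$, $h\ge 0$ integrable, $p\ge 1$. Then $g$ is nondecreasing and $g(0)=c_0$, and any measurable $f\ge 0$ satisfying $f(t)\le c_0+\int_0^t h\,ds+c_1\int_0^t f^p\,ds$ a.e. on $[0,\tilde T]$ with $f\in L^p$ satisfies $f(t)\le g(t)$ for a.e. $t\in[0,\tilde T]$. -/
import Mathlib


open MeasureTheory Set

private lemma ae_Icc_of_ae_Ioc {T a b : ℝ} {P : ℝ → Prop} (ha : 0 ≤ a) (hb : b ≤ T)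
    (H : ∀ᵐ t ∂(volume.restrict (Ioc 0 T)), P t) :
    ∀ᵐ t ∂(volume.restrict (Icc a b)), P t := by
  rw [← Measure.restrict_congr_set Ioc_ae_eq_Icc]
  exact ae_restrict_of_ae_restrict_of_subset (Ioc_subset_Ioc ha hb) H

/-- Grönwall via iteration: a continuous function satisfying `u ≤ K ∫₀ᵗ u` is `≤ 0`. -/
private lemma gronwall_aux {T K : ℝ} {u : ℝ → ℝ} (hK : 0 ≤ K)
    (hu_cont : ContinuousOn u (Icc 0 T))
    (hu_le : ∀ t ∈ Icc (0:ℝ) T, u t ≤ K * ∫ s in (0:ℝ)..t, u s) :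
    ∀ t ∈ Icc (0:ℝ) T, u t ≤ 0 := by
  rcases isCompact_Icc.exists_bound_of_continuousOn hu_cont with ⟨C, hC⟩
  have key : ∀ n : ℕ, ∀ t ∈ Icc (0:ℝ) T, u t ≤ C * K ^ n / n.factorial * t ^ n := by
    intro n
    induction n with
    | zero =>
      intro t ht
      simpa using (le_abs_self (u t)).trans (hC t ht)
    | succ n ih =>
      intro t ht
      have h1 : u t ≤ K * ∫ s in (0:ℝ)..t, u s := hu_le t ht
      have hint_u : IntervalIntegrable u volume 0 t := by
        apply ContinuousOn.intervalIntegrable_of_Icc ht.1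
        exact hu_cont.mono (Icc_subset_Icc le_rfl ht.2)
      have hint_b : IntervalIntegrable (fun s => C * K ^ n / n.factorial * s ^ n) volume 0 t :=
        (Continuous.intervalIntegrable (by continuity) 0 t)
      have h2 : (∫ s in (0:ℝ)..t, u s) ≤ ∫ s in (0:ℝ)..t, C * K ^ n / n.factorial * s ^ n := by
        apply intervalIntegral.integral_mono_on ht.1 hint_u hint_b
        intro x hx
        exact ih x ⟨hx.1, hx.2.trans ht.2⟩
      have h3 : (∫ s in (0:ℝ)..t, C * K ^ n / n.factorial * s ^ n)
          = C * K ^ n / n.factorial * ((t ^ (n + 1) - 0 ^ (n + 1)) / (n + 1)) := by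
        rw [intervalIntegral.integral_const_mul, integral_pow]
      have hfac : (n.factorial : ℝ) ≠ 0 := Nat.cast_ne_zero.mpr (Nat.factorial_ne_zero n)
      have hfac1 : ((n + 1 : ℕ) : ℝ) ≠ 0 := Nat.cast_ne_zero.mpr (Nat.succ_ne_zero n)
      calc u t ≤ K * ∫ s in (0:ℝ)..t, u s := h1
        _ ≤ K * ∫ s in (0:ℝ)..t, C * K ^ n / n.factorial * s ^ n :=
            mul_le_mul_of_nonneg_left h2 hK
        _ = C * K ^ (n + 1) / (n + 1).factorial * t ^ (n + 1) := by
            rw [h3, Nat.factorial_succ]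
            push_cast
            field_simp
            ring
  intro t ht
  have hlim : Filter.Tendsto (fun n : ℕ => C * ((K * t) ^ n / n.factorial)) Filter.atTop (nhds 0) := by
    have := (FloorSemiring.tendsto_pow_div_factorial_atTop (K * t)).const_mul C
    simpa using this
  refine ge_of_tendsto' hlim fun n => ?_
  have := key n t ht
  calc u t ≤ C * K ^ n / n.factorial * t ^ n := this
    _ = C * ((K * t) ^ n / n.factorial) := by rw [mul_pow]; ring

/-- Mean value estimate for `x ↦ x ^ p` on `[0, M]`. -/
private lemma rpow_sub_rpow_le_aux {p M a b : ℝ} (hp : 1 ≤ p) (ha : 0 ≤ a) (hb : 0 ≤ b)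
    (haM : a ≤ M) (hbM : b ≤ M) :
    b ^ p - a ^ p ≤ p * M ^ (p - 1) * max (b - a) 0 := by
  have hp0 : (0:ℝ) ≤ p := by linarith
  have hp1 : (0:ℝ) ≤ p - 1 := by linarith
  have hM0 : 0 ≤ M := le_trans ha haM
  have hC0 : 0 ≤ p * M ^ (p - 1) := mul_nonneg hp0 (Real.rpow_nonneg hM0 _)
  by_cases hab : b ≤ a
  · have : b ^ p ≤ a ^ p := Real.rpow_le_rpow hb hab hp0
    have h0 : (0:ℝ) ≤ p * M ^ (p - 1) * max (b - a) 0 :=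
      mul_nonneg hC0 (le_max_right _ _)
    linarith
  · push_neg at hab
    have hmax : max (b - a) 0 = b - a := max_eq_left (by linarith)
    have hderiv : ∀ x ∈ Icc (0:ℝ) M,
        HasDerivWithinAt (fun y : ℝ => y ^ p) (p * x ^ (p - 1)) (Icc 0 M) x := fun x _ =>
      (Real.hasDerivAt_rpow_const (Or.inr hp)).hasDerivWithinAt
    have hbound : ∀ x ∈ Icc (0:ℝ) M, ‖p * x ^ (p - 1)‖ ≤ p * M ^ (p - 1) := by
      intro x hx
      have h1 : 0 ≤ x ^ (p - 1) := Real.rpow_nonneg hx.1 _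
      have h2 : x ^ (p - 1) ≤ M ^ (p - 1) := Real.rpow_le_rpow hx.1 hx.2 hp1
      rw [Real.norm_eq_abs, abs_of_nonneg (mul_nonneg hp0 h1)]
      exact mul_le_mul_of_nonneg_left h2 hp0
    have := (convex_Icc (0:ℝ) M).norm_image_sub_le_of_norm_hasDerivWithin_le hderiv hbound
      (⟨ha, haM⟩ : a ∈ Icc (0:ℝ) M) (⟨hb, hbM⟩ : b ∈ Icc (0:ℝ) M)
    rw [Real.norm_eq_abs, Real.norm_eq_abs] at this
    rw [hmax]
    calc b ^ p - a ^ p ≤ |b ^ p - a ^ p| := le_abs_self _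
      _ ≤ p * M ^ (p - 1) * |b - a| := this
      _ = p * M ^ (p - 1) * (b - a) := by rw [abs_of_pos (by linarith)]

/-- **Comparison principle for the nonlinear Volterra integral equation.** If a
continuous `g` on `[0,T']` solves `g t = c₀ + ∫₀ᵗ h + c₁ ∫₀ᵗ g^p` with
`c₀, c₁ ≥ 0`, `h ≥ 0` integrable and `p ≥ 1`, then `g` is nondecreasing with
`g 0 = c₀`, and any nonnegative measurable `f ∈ L^p` satisfying the
corresponding integral inequality a.e. satisfies `f ≤ g` a.e. on `[0,T']`. -/
theorem volterra_comparison_principle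
    (T' p c0 c1 : ℝ) (hT' : 0 < T') (hp : 1 ≤ p) (hc0 : 0 ≤ c0) (hc1 : 0 ≤ c1)
    (h : ℝ → ℝ)
    (hh_nonneg : ∀ᵐ t ∂(volume.restrict (Ioc 0 T')), 0 ≤ h t)
    (hh_int : IntegrableOn h (Ioc 0 T'))
    (g : ℝ → ℝ) (hg_cont : ContinuousOn g (Icc 0 T'))
    (hg_eq : ∀ t ∈ Icc (0:ℝ) T',
      g t = c0 + (∫ s in (0:ℝ)..t, h s) + c1 * ∫ s in (0:ℝ)..t, g s ^ p) :
    (MonotoneOn g (Icc 0 T') ∧ g 0 = c0) ∧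
      ∀ f : ℝ → ℝ, AEMeasurable f (volume.restrict (Ioc 0 T')) →
        (∀ᵐ t ∂(volume.restrict (Ioc 0 T')), 0 ≤ f t) →
        IntegrableOn (fun t => f t ^ p) (Ioc 0 T') →
        (∀ᵐ t ∂(volume.restrict (Ioc 0 T')),
          f t ≤ c0 + (∫ s in (0:ℝ)..t, h s) + c1 * ∫ s in (0:ℝ)..t, f s ^ p) →
        ∀ᵐ t ∂(volume.restrict (Ioc 0 T')), f t ≤ g t := by
  have hp0 : (0:ℝ) ≤ p := by linarith
  have hp1 : (0:ℝ) ≤ p - 1 := by linarith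
  -- continuity and integrability of `g ^ p`
  have hgp_cont : ContinuousOn (fun s => g s ^ p) (Icc 0 T') :=
    hg_cont.rpow_const fun x _ => Or.inr hp0
  have hgp_ii : ∀ t ∈ Icc (0:ℝ) T', IntervalIntegrable (fun s => g s ^ p) volume 0 t :=
    fun t ht => ContinuousOn.intervalIntegrable_of_Icc ht.1
      (hgp_cont.mono (Icc_subset_Icc le_rfl ht.2))
  have hh_ii : ∀ t ∈ Icc (0:ℝ) T', IntervalIntegrable h volume 0 t := fun t ht =>
    (intervalIntegrable_iff_integrableOn_Ioc_of_le ht.1).mpr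
      (hh_int.mono_set (Ioc_subset_Ioc le_rfl ht.2))
  have hint_h_nonneg : ∀ a b : ℝ, 0 ≤ a → a ≤ b → b ≤ T' →
      0 ≤ ∫ s in a..b, h s := by
    intro a b ha hab hb
    exact intervalIntegral.integral_nonneg_of_ae_restrict hab (ae_Icc_of_ae_Ioc ha hb hh_nonneg)
  -- Step 1: g is nonnegative on [0, T']
  have hg_nonneg : ∀ t ∈ Icc (0:ℝ) T', 0 ≤ g t := by
    set w : ℝ → ℝ := fun t => max (-g t) 0 with hw_def
    have hw_cont : ContinuousOn w (Icc 0 T') := hg_cont.neg.sup continuousOn_const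
    have hw_nonneg : ∀ s, 0 ≤ w s := fun s => le_max_right _ _
    rcases isCompact_Icc.exists_bound_of_continuousOn hw_cont with ⟨B, hB⟩
    have hwB : ∀ s ∈ Icc (0:ℝ) T', w s ≤ B := fun s hs =>
      (le_abs_self (w s)).trans (hB s hs)
    have hB0 : 0 ≤ B := le_trans (hw_nonneg 0) (hwB 0 ⟨le_rfl, hT'.le⟩)
    have hpt : ∀ s ∈ Icc (0:ℝ) T', -(g s ^ p) ≤ B ^ (p - 1) * w s := by
      intro s hs
      by_cases hgs : 0 ≤ g s
      · have h1 : 0 ≤ g s ^ p := Real.rpow_nonneg hgs p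
        have h2 : 0 ≤ B ^ (p - 1) * w s :=
          mul_nonneg (Real.rpow_nonneg hB0 _) (hw_nonneg s)
        linarith
      · push_neg at hgs
        have hws : 0 < w s := lt_max_of_lt_left (by linarith)
        have hwe : w s = -g s := max_eq_left (by linarith)
        have h1 : -(g s ^ p) ≤ |g s ^ p| := neg_le_abs _
        have h2 : |g s ^ p| ≤ |g s| ^ p := Real.abs_rpow_le_abs_rpow _ _
        have h3 : |g s| = w s := by rw [hwe, abs_of_neg hgs]
        have h4 : w s ^ p = w s ^ (p - 1) * w s := by
          rw [← Real.rpow_add_one (ne_of_gt hws) (p - 1)]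
          ring_nf
        have h5 : w s ^ (p - 1) ≤ B ^ (p - 1) :=
          Real.rpow_le_rpow hws.le (hwB s hs) hp1
        calc -(g s ^ p) ≤ |g s| ^ p := h1.trans h2
          _ = w s ^ (p - 1) * w s := by rw [h3, h4]
          _ ≤ B ^ (p - 1) * w s := mul_le_mul_of_nonneg_right h5 hws.le
    have hw_le : ∀ t ∈ Icc (0:ℝ) T', w t ≤ (c1 * B ^ (p - 1)) * ∫ s in (0:ℝ)..t, w s := by
      intro t ht
      have hint_w : IntervalIntegrable w volume 0 t :=
        ContinuousOn.intervalIntegrable_of_Icc ht.1 (hw_cont.mono (Icc_subset_Icc le_rfl ht.2))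
      have hIw : 0 ≤ ∫ s in (0:ℝ)..t, w s :=
        intervalIntegral.integral_nonneg ht.1 fun s _ => hw_nonneg s
      have hrhs0 : 0 ≤ (c1 * B ^ (p - 1)) * ∫ s in (0:ℝ)..t, w s :=
        mul_nonneg (mul_nonneg hc1 (Real.rpow_nonneg hB0 _)) hIw
      refine max_le ?_ hrhs0
      have hint_gp : IntervalIntegrable (fun s => g s ^ p) volume 0 t := hgp_ii t ht
      have hmono : (∫ s in (0:ℝ)..t, -(g s ^ p)) ≤ ∫ s in (0:ℝ)..t, B ^ (p - 1) * w s := by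
        apply intervalIntegral.integral_mono_on ht.1 hint_gp.neg (hint_w.const_mul _)
        intro x hx
        exact hpt x ⟨hx.1, hx.2.trans ht.2⟩
      have hIh : 0 ≤ ∫ s in (0:ℝ)..t, h s := hint_h_nonneg 0 t le_rfl ht.1 ht.2
      have heq : -g t = -c0 - (∫ s in (0:ℝ)..t, h s) - c1 * ∫ s in (0:ℝ)..t, g s ^ p := by
        rw [hg_eq t ht]; ring
      have hneg : -c1 * ∫ s in (0:ℝ)..t, g s ^ p = c1 * ∫ s in (0:ℝ)..t, -(g s ^ p) := by
        rw [intervalIntegral.integral_neg]; ring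
      calc -g t = -c0 - (∫ s in (0:ℝ)..t, h s) - c1 * ∫ s in (0:ℝ)..t, g s ^ p := heq
        _ ≤ -c1 * ∫ s in (0:ℝ)..t, g s ^ p := by linarith
        _ = c1 * ∫ s in (0:ℝ)..t, -(g s ^ p) := hneg
        _ ≤ c1 * ∫ s in (0:ℝ)..t, B ^ (p - 1) * w s := mul_le_mul_of_nonneg_left hmono hc1
        _ = (c1 * B ^ (p - 1)) * ∫ s in (0:ℝ)..t, w s := by
            rw [intervalIntegral.integral_const_mul]; ring
    have := gronwall_aux (mul_nonneg hc1 (Real.rpow_nonneg hB0 _)) hw_cont hw_le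
    intro t ht
    have h1 : w t ≤ 0 := this t ht
    have h2 : -g t ≤ w t := le_max_left _ _
    linarith
  -- Step 2: monotonicity and initial value
  have hg0 : g 0 = c0 := by
    have := hg_eq 0 ⟨le_rfl, hT'.le⟩
    simpa using this
  have hg_mono : MonotoneOn g (Icc 0 T') := by
    intro a ha b hb hab
    have hii_ha : IntervalIntegrable h volume 0 a := hh_ii a ha
    have hii_hb : IntervalIntegrable h volume 0 b := hh_ii b hb
    have hii_ga : IntervalIntegrable (fun s => g s ^ p) volume 0 a := hgp_ii a ha
    have hii_gb : IntervalIntegrable (fun s => g s ^ p) volume 0 b := hgp_ii b hb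
    have hsub_h : (∫ s in (0:ℝ)..b, h s) - ∫ s in (0:ℝ)..a, h s = ∫ s in a..b, h s :=
      intervalIntegral.integral_interval_sub_left hii_hb hii_ha
    have hsub_g : (∫ s in (0:ℝ)..b, g s ^ p) - ∫ s in (0:ℝ)..a, g s ^ p
        = ∫ s in a..b, g s ^ p :=
      intervalIntegral.integral_interval_sub_left hii_gb hii_ga
    have h1 : 0 ≤ ∫ s in a..b, h s :=
      intervalIntegral.integral_nonneg_of_ae_restrict hab
        (ae_Icc_of_ae_Ioc ha.1 hb.2 hh_nonneg)
    have h2 : 0 ≤ ∫ s in a..b, g s ^ p :=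
      intervalIntegral.integral_nonneg hab fun x hx =>
        Real.rpow_nonneg (hg_nonneg x ⟨ha.1.trans hx.1, hx.2.trans hb.2⟩) p
    rw [hg_eq a ha, hg_eq b hb]
    have h3 : c1 * (∫ s in (0:ℝ)..a, g s ^ p) ≤ c1 * ∫ s in (0:ℝ)..b, g s ^ p :=
      mul_le_mul_of_nonneg_left (by linarith) hc1
    linarith
  refine ⟨⟨hg_mono, hg0⟩, ?_⟩
  -- Step 3: comparison
  intro f _hf_meas hf_nonneg hfp_int hf_ineq
  set F : ℝ → ℝ := fun t => c0 + (∫ s in (0:ℝ)..t, h s) + c1 * ∫ s in (0:ℝ)..t, f s ^ p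
    with hF_def
  have hfp_ii : ∀ t ∈ Icc (0:ℝ) T', IntervalIntegrable (fun s => f s ^ p) volume 0 t :=
    fun t ht => (intervalIntegrable_iff_integrableOn_Ioc_of_le ht.1).mpr
      (hfp_int.mono_set (Ioc_subset_Ioc le_rfl ht.2))
  have hF_cont : ContinuousOn F (Icc 0 T') := by
    have huIcc : uIcc (0:ℝ) T' = Icc 0 T' := uIcc_of_le hT'.le
    have h1 : ContinuousOn (fun t => ∫ s in (0:ℝ)..t, h s) (Icc 0 T') := by
      rw [← huIcc]
      exact intervalIntegral.continuousOn_primitive_interval'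
        (hh_ii T' ⟨hT'.le, le_rfl⟩) left_mem_uIcc
    have h2 : ContinuousOn (fun t => ∫ s in (0:ℝ)..t, f s ^ p) (Icc 0 T') := by
      rw [← huIcc]
      exact intervalIntegral.continuousOn_primitive_interval'
        (hfp_ii T' ⟨hT'.le, le_rfl⟩) left_mem_uIcc
    exact (continuousOn_const.add h1).add (continuousOn_const.mul h2)
  -- a.e. bound f ≤ F
  have hf_leF : ∀ᵐ t ∂(volume.restrict (Ioc 0 T')), f t ≤ F t := hf_ineq
  -- Bounds for g and F
  rcases isCompact_Icc.exists_bound_of_continuousOn hg_cont with ⟨M₁, hM₁⟩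
  rcases isCompact_Icc.exists_bound_of_continuousOn hF_cont with ⟨M₂, hM₂⟩
  set M : ℝ := max M₁ M₂ with hM_def
  have hgM : ∀ t ∈ Icc (0:ℝ) T', g t ≤ M := fun t ht =>
    (le_abs_self _).trans ((hM₁ t ht).trans (le_max_left _ _))
  have hFM : ∀ t ∈ Icc (0:ℝ) T', F t ≤ M := fun t ht =>
    (le_abs_self _).trans ((hM₂ t ht).trans (le_max_right _ _))
  have hM0 : 0 ≤ M := le_trans (hg_nonneg 0 ⟨le_rfl, hT'.le⟩) (hgM 0 ⟨le_rfl, hT'.le⟩)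
  set L : ℝ := p * M ^ (p - 1) with hL_def
  have hL0 : 0 ≤ L := mul_nonneg hp0 (Real.rpow_nonneg hM0 _)
  set u : ℝ → ℝ := fun t => max (F t - g t) 0 with hu_def
  have hu_cont : ContinuousOn u (Icc 0 T') := (hF_cont.sub hg_cont).sup continuousOn_const
  have hu_nonneg : ∀ s, 0 ≤ u s := fun s => le_max_right _ _
  have hu_le : ∀ t ∈ Icc (0:ℝ) T', u t ≤ (c1 * L) * ∫ s in (0:ℝ)..t, u s := by
    intro t ht
    have hint_u : IntervalIntegrable u volume 0 t :=
      ContinuousOn.intervalIntegrable_of_Icc ht.1 (hu_cont.mono (Icc_subset_Icc le_rfl ht.2))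
    have hIu : 0 ≤ ∫ s in (0:ℝ)..t, u s :=
      intervalIntegral.integral_nonneg ht.1 fun s _ => hu_nonneg s
    have hrhs0 : 0 ≤ (c1 * L) * ∫ s in (0:ℝ)..t, u s :=
      mul_nonneg (mul_nonneg hc1 hL0) hIu
    refine max_le ?_ hrhs0
    have hint_fp : IntervalIntegrable (fun s => f s ^ p) volume 0 t := hfp_ii t ht
    have hint_gp : IntervalIntegrable (fun s => g s ^ p) volume 0 t := hgp_ii t ht
    -- a.e. pointwise bound on [0, t]
    have hae : ∀ᵐ s ∂(volume.restrict (Icc 0 t)), f s ^ p - g s ^ p ≤ L * u s := by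
      filter_upwards [ae_Icc_of_ae_Ioc le_rfl ht.2 hf_nonneg,
        ae_Icc_of_ae_Ioc le_rfl ht.2 hf_leF,
        ae_restrict_mem measurableSet_Icc] with s hs1 hs2 hs3
      have hsT : s ∈ Icc (0:ℝ) T' := ⟨hs3.1, hs3.2.trans ht.2⟩
      have hg0s : 0 ≤ g s := hg_nonneg s hsT
      have hgMs : g s ≤ M := hgM s hsT
      have hfMs : f s ≤ M := hs2.trans (hFM s hsT)
      have hkey := rpow_sub_rpow_le_aux hp hg0s hs1 hgMs hfMs
      have hmm : max (f s - g s) 0 ≤ u s :=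
        max_le_max (sub_le_sub_right hs2 _) le_rfl
      calc f s ^ p - g s ^ p ≤ p * M ^ (p - 1) * max (f s - g s) 0 := hkey
        _ ≤ L * u s := mul_le_mul_of_nonneg_left hmm hL0
    have hmono : (∫ s in (0:ℝ)..t, (f s ^ p - g s ^ p)) ≤ ∫ s in (0:ℝ)..t, L * u s :=
      intervalIntegral.integral_mono_ae_restrict ht.1 (hint_fp.sub hint_gp)
        (hint_u.const_mul _) hae
    have hFg : F t - g t = c1 * ∫ s in (0:ℝ)..t, (f s ^ p - g s ^ p) := by
      rw [hg_eq t ht, intervalIntegral.integral_sub hint_fp hint_gp]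
      simp only [hF_def]
      ring
    calc F t - g t = c1 * ∫ s in (0:ℝ)..t, (f s ^ p - g s ^ p) := hFg
      _ ≤ c1 * ∫ s in (0:ℝ)..t, L * u s := mul_le_mul_of_nonneg_left hmono hc1
      _ = (c1 * L) * ∫ s in (0:ℝ)..t, u s := by
          rw [intervalIntegral.integral_const_mul]; ring
  have hu_zero := gronwall_aux (mul_nonneg hc1 hL0) hu_cont hu_le
  have hFg_le : ∀ t ∈ Icc (0:ℝ) T', F t ≤ g t := by
    intro t ht
    have h1 : u t ≤ 0 := hu_zero t ht
    have h2 : F t - g t ≤ u t := le_max_left _ _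
    linarith
  filter_upwards [hf_leF, ae_restrict_mem measurableSet_Ioc] with t h1 h2
  exact h1.trans (hFg_le t ⟨h2.1.le, h2.2⟩)
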